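/- Let 𝓛 and K⁻¹ be positive self-adjoint operators on a Hilbert space, g_λ = (I + λ𝓛)⁻¹ g_ρ and g_{λ,μ} = (I + λ𝓛 + λμK⁻¹)⁻¹ g_ρ. If g_ρ = Σ_{i=1}^r ⟨g_ρ, e_i⟩ e_i with each eigenvector e_i of 𝓛 satisfying K^{-1/2} e_i ∈ L², then ‖g_{λ,μ} - g_λ‖²_{L²} ≤ λμ c_a² ‖g_ρ‖²_{L²}, where c_a² = Σ_{i=1}^r ‖K^{-1/2} e_i‖²_{L²}. -/

import Mathlib

open RealInnerProductSpace Finset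

/-- Cauchy–Schwarz for the positive bilinear form `(u,v) ↦ ⟪u, B v⟫`. -/
lemma pos_form_cauchy_schwarz
    {E : Type*} [NormedAddCommGroup E] [InnerProductSpace ℝ E] [CompleteSpace E]
    (B : E →L[ℝ] E) (hB : IsSelfAdjoint B) (hBpos : ∀ v, 0 ≤ ⟪v, B v⟫) (u v : E) :
    ⟪u, B v⟫ ^ 2 ≤ ⟪u, B u⟫ * ⟪v, B v⟫ := by
  have hsym : ∀ x y : E, ⟪x, B y⟫ = ⟪y, B x⟫ := by
    intro x y
    have h := hB.isSymmetric x y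
    simp only [ContinuousLinearMap.coe_coe] at h
    rw [← h, real_inner_comm]
  have hq : ∀ t : ℝ, 0 ≤ ⟪v, B v⟫ * (t * t) + (2 * ⟪u, B v⟫) * t + ⟪u, B u⟫ := by
    intro t
    have h := hBpos (u + t • v)
    have hexp : ⟪u + t • v, B (u + t • v)⟫
        = ⟪v, B v⟫ * (t * t) + (2 * ⟪u, B v⟫) * t + ⟪u, B u⟫ := by
      rw [map_add, map_smul]
      simp only [inner_add_add_self, inner_add_left, inner_add_right,
        real_inner_smul_left, real_inner_smul_right]
      rw [hsym v u]
      ring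
    linarith [hexp ▸ h]
  have := discrim_le_zero hq
  rw [discrim] at this
  nlinarith [this]

set_option maxHeartbeats 1000000 in
theorem tikhonov_mu_bias_bound
    {E : Type*} [NormedAddCommGroup E] [InnerProductSpace ℝ E] [CompleteSpace E]
    (A B : E →L[ℝ] E)
    (hA : IsSelfAdjoint A) (hApos : ∀ v, 0 ≤ ⟪v, A v⟫)
    (hB : IsSelfAdjoint B) (hBpos : ∀ v, 0 ≤ ⟪v, B v⟫)
    (e : ℕ → E) (he : Orthonormal ℝ e)
    (ν : ℕ → ℝ) (hν : ∀ i, 0 ≤ ν i) (heig : ∀ i, A (e i) = ν i • e i)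
    (r : ℕ) (gρ : E) (hgρ : gρ = ∑ i ∈ range r, ⟪gρ, e i⟫ • e i)
    (lam μ : ℝ) (hlam : 0 < lam) (hμ : 0 < μ)
    (glam glamμ : E)
    (hglam : glam + lam • A glam = gρ)
    (hglamμ : glamμ + lam • A glamμ + (lam * μ) • B glamμ = gρ) :
    ‖glamμ - glam‖ ^ 2
      ≤ lam * μ * (∑ i ∈ range r, ⟪e i, B (e i)⟫) * ‖gρ‖ ^ 2 := by
  set c : ℕ → ℝ := fun i => ⟪gρ, e i⟫ with hc
  set a : ℕ → ℝ := fun i => c i / (1 + lam * ν i) with ha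
  have hden : ∀ i, 0 < 1 + lam * ν i := fun i => by
    have := hν i; nlinarith
  -- glam is explicit
  have hg_eq : glam = ∑ i ∈ range r, a i • e i := by
    set g : E := ∑ i ∈ range r, a i • e i with hg
    have hres : g + lam • A g = gρ := by
      rw [hg, map_sum, Finset.smul_sum]
      rw [hgρ, ← Finset.sum_add_distrib]
      refine Finset.sum_congr rfl fun i _ => ?_
      rw [map_smul, heig i, smul_smul, smul_smul, ← add_smul]
      congr 1
      have h := (hden i).ne'
      simp only [ha, hc]
      field_simp
    -- uniqueness
    have hw : (glam - g) + lam • A (glam - g) = 0 := by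
      have : (glam + lam • A glam) - (g + lam • A g) = 0 := by
        rw [hglam, hres, sub_self]
      rw [← this]
      rw [map_sub, smul_sub]
      abel
    have hinner : ⟪glam - g, (glam - g) + lam • A (glam - g)⟫ = 0 := by
      rw [hw, inner_zero_right]
    rw [inner_add_right, real_inner_smul_right, real_inner_self_eq_norm_sq] at hinner
    have h1 : 0 ≤ lam * ⟪glam - g, A (glam - g)⟫ :=
      mul_nonneg hlam.le (hApos _)
    have h2 : ‖glam - g‖ ^ 2 = 0 := by nlinarith [sq_nonneg ‖glam - g‖]
    exact sub_eq_zero.mp (by rwa [pow_eq_zero_iff two_ne_zero, norm_eq_zero] at h2)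
  set d : E := glamμ - glam with hd
  set b : ℕ → ℝ := fun i => ⟪e i, B (e i)⟫ with hbdef
  have hbnn : ∀ i, 0 ≤ b i := fun i => hBpos _
  -- expand the quadratic form at glam
  have hQ : ⟪glam, B glam⟫ ≤ (∑ i ∈ range r, (a i) ^ 2) * (∑ i ∈ range r, b i) := by
    have hexp : ⟪glam, B glam⟫
        = ∑ i ∈ range r, ∑ j ∈ range r, a i * a j * ⟪e i, B (e j)⟫ := by
      rw [hg_eq, map_sum, sum_inner]
      refine Finset.sum_congr rfl fun i _ => ?_
      rw [real_inner_smul_left, inner_sum, Finset.mul_sum]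
      refine Finset.sum_congr rfl fun j _ => ?_
      rw [map_smul, real_inner_smul_right]; ring
    rw [hexp]
    calc ∑ i ∈ range r, ∑ j ∈ range r, a i * a j * ⟪e i, B (e j)⟫
        ≤ ∑ i ∈ range r, ∑ j ∈ range r,
            (|a i| * Real.sqrt (b i)) * (|a j| * Real.sqrt (b j)) := by
          refine Finset.sum_le_sum fun i _ => Finset.sum_le_sum fun j _ => ?_
          have hcs := pos_form_cauchy_schwarz B hB hBpos (e i) (e j)
          have habs : |⟪e i, B (e j)⟫| ≤ Real.sqrt (b i) * Real.sqrt (b j) := by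
            rw [← Real.sqrt_sq_eq_abs, ← Real.sqrt_mul (hbnn i)]
            exact Real.sqrt_le_sqrt hcs
          have h1 : a i * a j * ⟪e i, B (e j)⟫ ≤ |a i| * |a j| * |⟪e i, B (e j)⟫| := by
            calc a i * a j * ⟪e i, B (e j)⟫ ≤ |a i * a j * ⟪e i, B (e j)⟫| := le_abs_self _
              _ = |a i| * |a j| * |⟪e i, B (e j)⟫| := by rw [abs_mul, abs_mul]
          have h2 : |a i| * |a j| * |⟪e i, B (e j)⟫|
              ≤ |a i| * |a j| * (Real.sqrt (b i) * Real.sqrt (b j)) :=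
            mul_le_mul_of_nonneg_left habs (by positivity)
          calc a i * a j * ⟪e i, B (e j)⟫
              ≤ |a i| * |a j| * (Real.sqrt (b i) * Real.sqrt (b j)) := le_trans h1 h2
            _ = (|a i| * Real.sqrt (b i)) * (|a j| * Real.sqrt (b j)) := by ring
      _ = (∑ i ∈ range r, |a i| * Real.sqrt (b i)) ^ 2 := by
          rw [sq, Finset.sum_mul_sum]
      _ ≤ (∑ i ∈ range r, |a i| ^ 2) * (∑ i ∈ range r, (Real.sqrt (b i)) ^ 2) :=
          Finset.sum_mul_sq_le_sq_mul_sq _ _ _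
      _ = (∑ i ∈ range r, (a i) ^ 2) * (∑ i ∈ range r, b i) := by
          congr 1
          · exact Finset.sum_congr rfl fun i _ => sq_abs _
          · exact Finset.sum_congr rfl fun i _ => Real.sq_sqrt (hbnn i)
  have hale : ∀ i, (a i) ^ 2 ≤ (c i) ^ 2 := by
    intro i
    have h1 : 1 ≤ (1 + lam * ν i) ^ 2 := by nlinarith [mul_nonneg hlam.le (hν i)]
    calc (a i) ^ 2 = (c i) ^ 2 / (1 + lam * ν i) ^ 2 := by rw [ha, div_pow]
      _ ≤ (c i) ^ 2 := div_le_self (sq_nonneg _) h1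
  have hnorm : ∑ i ∈ range r, (c i) ^ 2 = ‖gρ‖ ^ 2 := by
    have h := congrArg (fun x => ⟪gρ, x⟫) hgρ
    simp only [inner_sum, real_inner_smul_right] at h
    rw [real_inner_self_eq_norm_sq] at h
    rw [h]
    exact Finset.sum_congr rfl fun i _ => pow_two _
  -- the resolvent difference equation
  have hdiff : d + lam • A d + (lam * μ) • B glamμ = 0 := by
    have h0 : d + lam • A d + (lam * μ) • B glamμ
        = (glamμ + lam • A glamμ + (lam * μ) • B glamμ) - (glam + lam • A glam) := by
      rw [hd, map_sub, smul_sub]; abel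
    rw [h0, hglamμ, hglam, sub_self]
  have hip : ⟪d, d⟫ + lam * ⟪d, A d⟫ + (lam * μ) * ⟪d, B glamμ⟫ = 0 := by
    have h := congrArg (fun x => ⟪d, x⟫) hdiff
    simpa [inner_add_right, real_inner_smul_right] using h
  have hsplit : ⟪d, B glamμ⟫ = ⟪d, B d⟫ + ⟪d, B glam⟫ := by
    have hgg : glamμ = d + glam := by rw [hd]; abel
    rw [hgg, map_add, inner_add_right]
  set x : ℝ := ⟪d, B d⟫ with hxdef
  set s : ℝ := ⟪d, B glam⟫ with hsdef
  set Q : ℝ := ⟪glam, B glam⟫ with hQdef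
  have hxnn : 0 ≤ x := hBpos d
  have hQnn : 0 ≤ Q := hBpos glam
  have hs2 : s ^ 2 ≤ x * Q := pos_form_cauchy_schwarz B hB hBpos d glam
  have hnd : ⟪d, d⟫ = ‖d‖ ^ 2 := real_inner_self_eq_norm_sq d
  have hkey : ‖d‖ ^ 2 + (lam * μ) * x ≤ -((lam * μ) * s) := by
    rw [hsplit, hnd] at hip
    nlinarith [mul_nonneg hlam.le (hApos d)]
  have hLm : 0 ≤ ‖d‖ ^ 2 + (lam * μ) * x :=
    add_nonneg (sq_nonneg _) (mul_nonneg (mul_pos hlam hμ).le hxnn)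
  have h1 : (‖d‖ ^ 2 + (lam * μ) * x) ^ 2 ≤ (lam * μ) ^ 2 * (x * Q) := by
    have h2 : (‖d‖ ^ 2 + (lam * μ) * x) ^ 2 ≤ ((lam * μ) * s) ^ 2 := by
      rw [← neg_sq ((lam * μ) * s)]
      exact pow_le_pow_left₀ hLm hkey 2
    calc (‖d‖ ^ 2 + (lam * μ) * x) ^ 2 ≤ ((lam * μ) * s) ^ 2 := h2
      _ = (lam * μ) ^ 2 * s ^ 2 := by ring
      _ ≤ (lam * μ) ^ 2 * (x * Q) := mul_le_mul_of_nonneg_left hs2 (sq_nonneg _)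
  have hfinal : ‖d‖ ^ 2 ≤ (lam * μ) * Q := by
    have h4 : 4 * ‖d‖ ^ 2 * ((lam * μ) * x) ≤ (lam * μ) ^ 2 * (x * Q) := by
      nlinarith [sq_nonneg (‖d‖ ^ 2 - lam * μ * x), h1]
    rcases eq_or_lt_of_le hxnn with hx0 | hxpos
    · have h5 : (‖d‖ ^ 2) ^ 2 ≤ 0 := by
        rw [← hx0] at h1
        nlinarith [h1]
      have hL : ‖d‖ ^ 2 = 0 := by nlinarith [sq_nonneg (‖d‖ ^ 2)]
      have : 0 ≤ (lam * μ) * Q := mul_nonneg (mul_pos hlam hμ).le hQnn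
      linarith
    · have hmx : 0 < (lam * μ) * x := mul_pos (mul_pos hlam hμ) hxpos
      nlinarith [h4, hmx, sq_nonneg ‖d‖]
  have hbsum : 0 ≤ ∑ i ∈ range r, b i := Finset.sum_nonneg fun i _ => hbnn i
  have hsum_a : ∑ i ∈ range r, (a i) ^ 2 ≤ ∑ i ∈ range r, (c i) ^ 2 :=
    Finset.sum_le_sum fun i _ => hale i
  calc ‖glamμ - glam‖ ^ 2 = ‖d‖ ^ 2 := by rw [hd]
    _ ≤ (lam * μ) * Q := hfinal
    _ ≤ (lam * μ) * ((∑ i ∈ range r, (a i) ^ 2) * (∑ i ∈ range r, b i)) :=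
        mul_le_mul_of_nonneg_left hQ (mul_pos hlam hμ).le
    _ ≤ (lam * μ) * ((∑ i ∈ range r, (c i) ^ 2) * (∑ i ∈ range r, b i)) := by
        have := mul_le_mul_of_nonneg_right hsum_a hbsum
        nlinarith [mul_pos hlam hμ]
    _ = lam * μ * (∑ i ∈ range r, b i) * ‖gρ‖ ^ 2 := by rw [hnorm]; ring
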